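/- Let L be an even hyperbolic lattice with infinitely many simple (−2)-roots, and suppose there is a cusp e of 𝒟_L with e.r ≤ N for all simple (−2)-roots r and for some constant N. Then every g ∈ Aut(𝒟_L) fixes e. -/

import Mathlib

namespace Stmt9Aux

section Aux
variable {L : Type*} [AddCommGroup L] [Module ℤ L]
variable {B : L →ₗ[ℤ] L →ₗ[ℤ] ℤ}

lemma Bsmul_left (n : ℤ) (x y : L) : B (n • x) y = n * B x y := by
  simp [map_smul, smul_eq_mul]
lemma Bsmul_right (n : ℤ) (x y : L) : B x (n • y) = n * B x y := by
  simp [map_smul, smul_eq_mul]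
lemma Bsub_left (x y z : L) : B (x - y) z = B x z - B y z := by simp [map_sub]
lemma Bsub_right (x y z : L) : B x (y - z) = B x y - B x z := by simp [map_sub]
lemma Badd_left (x y z : L) : B (x + y) z = B x z + B y z := by simp [map_add]
lemma Badd_right (x y z : L) : B x (y + z) = B x y + B x z := by simp [map_add]
lemma Bneg_left (x y : L) : B (-x) y = - B x y := by simp
lemma Bneg_right (x y : L) : B x (-y) = - B x y := by simp

/-- t2: cancellation of scalars in a free module. -/
lemma smul_cancel [Module.Free ℤ L] (d : ℤ) (hd : d ≠ 0) (z : L) (h : d • z = 0) :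
    z = 0 := by
  simp only [← Int.cast_smul_eq_zsmul ℤ, Int.cast_id] at h
  have hb := Module.Free.chooseBasis ℤ L
  have h2 : d • hb.repr z = 0 := by
    have h4 := hb.repr.map_smul d z
    rw [h] at h4; simpa using h4.symm
  have h3 : hb.repr z = 0 := by
    ext i
    have := congrArg (fun f => f i) h2
    simp only [Finsupp.coe_smul, Pi.smul_apply, smul_eq_mul, Finsupp.coe_zero,
      Pi.zero_apply] at this ⊢
    exact (mul_eq_zero.mp this).resolve_left hd
  have := congrArg hb.repr.symm h3
  simpa using this

/-- Orthogonal complement of a positive-square vector is negative definite. -/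
lemma negOrth
    (hsym : ∀ x y : L, B x y = B y x)
    (hhyp : ∃ v : L, 0 < B v v ∧ ∀ x : L, B v x = 0 → x ≠ 0 → B x x < 0) :
    ∀ a : L, 0 < B a a → ∀ x : L, B a x = 0 → x ≠ 0 → B x x < 0 := by
  obtain ⟨v, hv, hvneg⟩ := hhyp
  intro a ha x hax hx
  have hva : B v a ≠ 0 := by
    intro h0
    have ha0 : a ≠ 0 := by rintro rfl; simp at ha
    have := hvneg a h0 ha0; linarith
  by_cases hw : (B v a) • x - (B v x) • a = 0
  · have h1 : B ((B v a) • x - (B v x) • a) a = 0 := by rw [hw]; simp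
    have h2 : B v a * B x a - B v x * B a a = 0 := by
      simpa [map_sub, map_smul, smul_eq_mul] using h1
    have hxa : B x a = 0 := by rw [hsym x a]; exact hax
    have hvx : B v x = 0 := by
      rw [hxa] at h2
      have : B v x * B a a = 0 := by linarith
      rcases mul_eq_zero.1 this with h | h
      · exact h
      · exact absurd h ha.ne'
    exact hvneg x hvx hx
  · have h1 : B v ((B v a) • x - (B v x) • a) = 0 := by
      simp [map_sub, map_smul, smul_eq_mul]; ring
    have h2 := hvneg _ h1 hw
    have h3 : B ((B v a) • x - (B v x) • a) ((B v a) • x - (B v x) • a)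
        = B v a * B v a * B x x + B v x * B v x * B a a
          - 2 * (B v a * B v x * B a x) := by
      simp [map_sub, map_smul, smul_eq_mul]
      rw [hsym x a]; ring
    rw [h3, hax] at h2
    nlinarith [sq_nonneg (B v a), sq_nonneg (B v x)]

/-- Two vectors in the closed positive cone (w.r.t. an anchor `p`) pair nonnegatively. -/
lemma sameCone
    (hsym : ∀ x y : L, B x y = B y x)
    (hneg : ∀ a : L, 0 < B a a → ∀ x : L, B a x = 0 → x ≠ 0 → B x x < 0)
    (p a b : L) (hp : 0 < B p p) (ha : 0 ≤ B a a) (hb : 0 ≤ B b b)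
    (hpa : 0 ≤ B p a) (hpb : 0 ≤ B p b) : 0 ≤ B a b := by
  by_cases hw : (B p b) • a - (B p a) • b = 0
  · have h1 : B a ((B p b) • a - (B p a) • b) = 0 := by rw [hw]; simp
    have h2 : B p b * B a a - B p a * B a b = 0 := by
      simpa [map_sub, map_smul, smul_eq_mul] using h1
    rcases hpa.lt_or_eq with hpa' | hpa'
    · nlinarith [mul_nonneg hpb ha]
    · by_cases ha0 : a = 0
      · simp [ha0]
      · have := hneg p hp a hpa'.symm ha0
        linarith
  · have h1 : B p ((B p b) • a - (B p a) • b) = 0 := by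
      simp [map_sub, map_smul, smul_eq_mul]; ring
    have h2 := hneg p hp _ h1 hw
    have h3 : B ((B p b) • a - (B p a) • b) ((B p b) • a - (B p a) • b)
        = B p b * B p b * B a a - 2 * (B p b * B p a * B a b)
          + B p a * B p a * B b b := by
      simp [map_sub, map_smul, smul_eq_mul]
      rw [hsym b a]; ring
    rw [h3] at h2
    nlinarith [mul_nonneg hpa hpb, mul_nonneg (mul_nonneg hpb hpb) ha,
      mul_nonneg (mul_nonneg hpa hpa) hb]

/-- Equality case: orthogonal vectors in the closed cone are proportional. -/
lemma sameConeEq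
    (hsym : ∀ x y : L, B x y = B y x)
    (hneg : ∀ a : L, 0 < B a a → ∀ x : L, B a x = 0 → x ≠ 0 → B x x < 0)
    (p a b : L) (hp : 0 < B p p) (ha : 0 ≤ B a a) (hb : 0 ≤ B b b)
    (hab : B a b = 0) : (B p b) • a = (B p a) • b := by
  by_contra hw
  have hw' : (B p b) • a - (B p a) • b ≠ 0 := sub_ne_zero_of_ne hw
  have h1 : B p ((B p b) • a - (B p a) • b) = 0 := by
    simp [map_sub, map_smul, smul_eq_mul]; ring
  have h2 := hneg p hp _ h1 hw'
  have h3 : B ((B p b) • a - (B p a) • b) ((B p b) • a - (B p a) • b)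
      = B p b * B p b * B a a - 2 * (B p b * B p a * B a b)
        + B p a * B p a * B b b := by
    simp [map_sub, map_smul, smul_eq_mul]
    rw [hsym b a]; ring
  rw [h3, hab] at h2
  nlinarith [sq_nonneg (B p b), sq_nonneg (B p a),
    mul_nonneg (mul_nonneg (le_of_lt hp) (le_of_lt hp)) ha,
    mul_nonneg (sq_nonneg (B p b)) ha, mul_nonneg (sq_nonneg (B p a)) hb]

/-- Cauchy–Schwarz in the (negative definite) orthogonal complement of a
positive-square vector. -/
lemma csOrth
    (hsym : ∀ x y : L, B x y = B y x)
    (hneg : ∀ a : L, 0 < B a a → ∀ x : L, B a x = 0 → x ≠ 0 → B x x < 0)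
    (a : L) (ha : 0 < B a a) (x y : L) (hx : B a x = 0) (hy : B a y = 0) :
    B x y * B x y ≤ B x x * B y y := by
  by_cases hy0 : y = 0
  · simp [hy0]
  have hyy : B y y < 0 := hneg a ha y hy hy0
  by_cases hz : (B y y) • x - (B x y) • y = 0
  · have h1 : B ((B y y) • x - (B x y) • y) x = 0 := by rw [hz]; simp
    have h2 : B y y * B x x - B x y * B y x = 0 := by
      simpa [map_sub, map_smul, smul_eq_mul] using h1
    rw [hsym y x] at h2
    nlinarith
  · have h1 : B a ((B y y) • x - (B x y) • y) = 0 := by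
      simp [map_smul, smul_eq_mul, hx, hy]
    have h2 := hneg a ha _ h1 hz
    have h3 : B ((B y y) • x - (B x y) • y) ((B y y) • x - (B x y) • y)
        = B y y * B y y * B x x - 2 * (B y y * B x y * B x y)
          + B x y * B x y * B y y := by
      simp [map_sub, map_smul, smul_eq_mul]
      rw [hsym y x]; ring
    rw [h3] at h2
    nlinarith

private lemma arith_bound (p m n t g C : ℤ) (hp : 1 ≤ p) (hnC : |n| ≤ C)
    (hE : 0 ≤ p * m ^ 2 - p ^ 2 * g)
    (hcs : (p * (p * t - n * m)) * (p * (p * t - n * m))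
      ≤ (p * m ^ 2 - p ^ 2 * g) * (p * (2 * p + n ^ 2))) :
    |t| ≤ (p * m ^ 2 - p ^ 2 * g) * (p * (2 * p + C ^ 2)) + C * |m| := by
  have hC : 0 ≤ C := le_trans (abs_nonneg _) hnC
  have hn2 : n ^ 2 ≤ C ^ 2 := by nlinarith [sq_abs n, abs_nonneg n]
  have h1 : p * (2 * p + n ^ 2) ≤ p * (2 * p + C ^ 2) := by nlinarith
  have h2 : (p * m ^ 2 - p ^ 2 * g) * (p * (2 * p + n ^ 2))
      ≤ (p * m ^ 2 - p ^ 2 * g) * (p * (2 * p + C ^ 2)) :=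
    mul_le_mul_of_nonneg_left h1 hE
  have h3 : p ^ 2 * (p * t - n * m) ^ 2
      ≤ (p * m ^ 2 - p ^ 2 * g) * (p * (2 * p + C ^ 2)) := by nlinarith
  have hp2 : 1 ≤ p ^ 2 := by nlinarith
  have h4 : (p * t - n * m) ^ 2 ≤ p ^ 2 * (p * t - n * m) ^ 2 := by
    nlinarith [sq_nonneg (p * t - n * m)]
  have h5 : |p * t - n * m| ≤ (p * t - n * m) ^ 2 := by
    rcases eq_or_ne (p * t - n * m) 0 with h | h
    · simp [h]
    · have h1' : 1 ≤ |p * t - n * m| := Int.one_le_abs h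
      calc |p * t - n * m| ≤ |p * t - n * m| * |p * t - n * m| :=
            le_mul_of_one_le_left (abs_nonneg _) h1'
        _ = (p * t - n * m) ^ 2 := by rw [← abs_mul, sq, abs_mul_self]
  have h6 : |p * t| ≤ |p * t - n * m| + C * |m| := by
    calc |p * t| = |(p * t - n * m) + n * m| := by ring_nf
      _ ≤ |p * t - n * m| + |n * m| := abs_add_le _ _
      _ ≤ |p * t - n * m| + C * |m| := by
          rw [abs_mul]
          nlinarith [abs_nonneg m, abs_nonneg n]
  have h7 : |t| ≤ |p * t| := by
    rw [abs_mul, abs_of_pos (by linarith : (0:ℤ) < p)]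
    exact le_mul_of_one_le_left (abs_nonneg _) hp
  linarith

/-- Finiteness of the set of `(−2)`-roots with bounded pairing against a
positive-square vector. -/
lemma rootsFinite [Module.Free ℤ L] [Module.Finite ℤ L]
    (hsym : ∀ x y : L, B x y = B y x)
    (hnondeg : ∀ x : L, (∀ y : L, B x y = 0) → x = 0)
    (hneg : ∀ a : L, 0 < B a a → ∀ x : L, B a x = 0 → x ≠ 0 → B x x < 0)
    (a : L) (ha : 0 < B a a) (C : ℤ) :
    {r : L | B r r = -2 ∧ |B a r| ≤ C}.Finite := by
  classical
  let b : Module.Basis (Module.Free.ChooseBasisIndex ℤ L) ℤ L := Module.Free.chooseBasis ℤ L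
  set K : Module.Free.ChooseBasisIndex ℤ L → ℤ := fun i =>
    (B a a * (B a (b i)) ^ 2 - (B a a) ^ 2 * B (b i) (b i)) * (B a a * (2 * B a a + C ^ 2))
      + C * |B a (b i)| with hK
  have hFinj : Function.Injective (fun x : L => fun i => B (b i) x) := by
    intro x y hxy
    have hz : B (x - y) = 0 := by
      apply b.ext
      intro i
      have h1 := congrFun hxy i
      simp only at h1
      rw [hsym]
      simp [map_sub, h1]
    have := hnondeg (x - y) (fun z => by rw [hz]; simp)
    exact sub_eq_zero.mp this
  have hmain : ∀ r ∈ {r : L | B r r = -2 ∧ |B a r| ≤ C},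
      ∀ i, |B (b i) r| ≤ K i := by
    rintro r ⟨hr2, hrC⟩ i
    have habb : B a (B a a • (b i) - B a (b i) • a) = 0 := by
      simp only [Bsub_right, Bsmul_right]; ring
    have harr : B a (B a a • r - B a r • a) = 0 := by
      simp only [Bsub_right, Bsmul_right]; ring
    have e1 : B (B a a • (b i) - B a (b i) • a) (B a a • r - B a r • a)
        = B a a * (B a a * B (b i) r - B a r * B a (b i)) := by
      simp only [Bsub_left, Bsub_right, Bsmul_left, Bsmul_right]
      rw [hsym (b i) a]
      ring
    have e2 : B (B a a • (b i) - B a (b i) • a) (B a a • (b i) - B a (b i) • a)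
        = -(B a a * (B a (b i)) ^ 2 - (B a a) ^ 2 * B (b i) (b i)) := by
      simp only [Bsub_left, Bsub_right, Bsmul_left, Bsmul_right]
      rw [hsym (b i) a]
      ring
    have e3 : B (B a a • r - B a r • a) (B a a • r - B a r • a)
        = -(B a a * (2 * B a a + (B a r) ^ 2)) := by
      simp only [Bsub_left, Bsub_right, Bsmul_left, Bsmul_right]
      rw [hsym r a, hr2]
      ring
    have hbbnn : B (B a a • (b i) - B a (b i) • a) (B a a • (b i) - B a (b i) • a) ≤ 0 := by
      by_cases h0 : (B a a • (b i) - B a (b i) • a) = 0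
      · rw [h0]; simp
      · exact (hneg a ha _ habb h0).le
    have hE : 0 ≤ B a a * (B a (b i)) ^ 2 - (B a a) ^ 2 * B (b i) (b i) := by
      rw [e2] at hbbnn; linarith
    have hcs := csOrth hsym hneg a ha _ _ habb harr
    rw [e1, e2, e3, neg_mul_neg] at hcs
    have := arith_bound (B a a) (B a (b i)) (B a r) (B (b i) r) (B (b i) (b i)) C
      ha hrC hE (by
        calc (B a a * (B a a * B (b i) r - B a r * B a (b i)))
              * (B a a * (B a a * B (b i) r - B a r * B a (b i)))
            ≤ (B a a * (B a (b i)) ^ 2 - (B a a) ^ 2 * B (b i) (b i))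
              * (B a a * (2 * B a a + (B a r) ^ 2)) := hcs
          _ = _ := by ring)
    calc |B (b i) r| ≤ _ := this
      _ = K i := by rw [hK]
  have hpi : (Set.univ.pi fun i => Set.Icc (-(K i)) (K i)).Finite :=
    Set.Finite.pi fun i => Set.finite_Icc _ _
  have hsub : {r : L | B r r = -2 ∧ |B a r| ≤ C} ⊆
      (fun x : L => fun i => B (b i) x) ⁻¹' (Set.univ.pi fun i => Set.Icc (-(K i)) (K i)) := by
    intro r hr
    simp only [Set.mem_preimage, Set.mem_pi, Set.mem_univ, Set.mem_Icc, forall_true_left]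
    intro i
    exact abs_le.mp (hmain r hr i)
  exact ((hpi.preimage hFinj.injOn).subset hsub)

/-- Auxiliary Cauchy–Schwarz estimate used in the cone-flip case. -/
lemma csAnchor
    (hsym : ∀ x y : L, B x y = B y x)
    (hneg : ∀ a : L, 0 < B a a → ∀ x : L, B a x = 0 → x ≠ 0 → B x x < 0)
    (z : L) (hz : 0 < B z z) (y r : L) (hzr : B z r = 0) (hr2 : B r r = -2)
    (hy : 0 ≤ B y y) : B z z * (B y r) ^ 2 ≤ 2 * (B y z) ^ 2 := by
  have h1 : B z (B z z • y - B y z • z) = 0 := by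
    simp only [Bsub_right, Bsmul_right]
    rw [hsym z y]; ring
  have hcs := csOrth hsym hneg z hz _ r h1 hzr
  have e1 : B (B z z • y - B y z • z) r = B z z * B y r := by
    simp only [Bsub_left, Bsmul_left, hzr]; ring
  have e2 : B (B z z • y - B y z • z) (B z z • y - B y z • z)
      = B z z * (B z z * B y y - (B y z) ^ 2) := by
    simp only [Bsub_left, Bsub_right, Bsmul_left, Bsmul_right]
    rw [hsym z y]; ring
  rw [e1, e2, hr2] at hcs
  -- hcs : (Bzz * Byr) * (Bzz * Byr) ≤ Bzz * (Bzz*Byy - Byz^2) * (-2)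
  have key : B z z * (B z z * (B y r) ^ 2) ≤ B z z * (2 * (B y z) ^ 2) := by
    nlinarith [mul_nonneg (mul_nonneg hz.le hz.le) hy]
  exact le_of_mul_le_mul_left key hz

private lemma sqrtStep (u y : ℤ) (hu : 0 ≤ u) (hy : 0 ≤ y) (h : u ^ 2 ≤ 2 * y ^ 2) :
    u ≤ 2 * y := by nlinarith

private lemma arith2 (a b P W S : ℤ) (ha : 0 < a) (hb : 0 < b) (hP : 1 ≤ P) (hW : 0 < W)
    (hS : S = a ^ 2 * P + 2 * (a * b * W) + b ^ 2 * P)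
    (h1 : S * a ^ 2 ≤ 2 * (a * W + b * P) ^ 2)
    (h2 : S * b ^ 2 ≤ 2 * (a * P + b * W) ^ 2) : a ≤ 4 * (P + W) := by
  have hy1 : 0 ≤ a * W + b * P := by positivity
  have hy2 : 0 ≤ a * P + b * W := by positivity
  have hSa : a ^ 2 ≤ S := by
    nlinarith [mul_nonneg (sq_nonneg a) (by linarith : (0:ℤ) ≤ P - 1),
      mul_pos (mul_pos ha hb) hW, mul_nonneg (sq_nonneg b) (by linarith : (0:ℤ) ≤ P)]
  have hSb : b ^ 2 ≤ S := by
    nlinarith [mul_nonneg (sq_nonneg b) (by linarith : (0:ℤ) ≤ P - 1),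
      mul_pos (mul_pos ha hb) hW, mul_nonneg (sq_nonneg a) (by linarith : (0:ℤ) ≤ P)]
  have k1 : (a ^ 2) ^ 2 ≤ 2 * (a * W + b * P) ^ 2 := by nlinarith [sq_nonneg a]
  have k2 : (b ^ 2) ^ 2 ≤ 2 * (a * P + b * W) ^ 2 := by nlinarith [sq_nonneg b]
  have k1' : a ^ 2 ≤ 2 * (a * W + b * P) := sqrtStep _ _ (sq_nonneg a) hy1 k1
  have k2' : b ^ 2 ≤ 2 * (a * P + b * W) := sqrtStep _ _ (sq_nonneg b) hy2 k2
  have hsum : (a + b) ^ 2 ≤ 2 * (a ^ 2 + b ^ 2) := by nlinarith [sq_nonneg (a - b)]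
  have hsum2 : a ^ 2 + b ^ 2 ≤ 2 * (P + W) * (a + b) := by nlinarith
  have hab : 0 < a + b := by linarith
  have : (a + b) * (a + b) ≤ (a + b) * (4 * (P + W)) := by nlinarith
  have hfin : a + b ≤ 4 * (P + W) := le_of_mul_le_mul_left this hab
  linarith

/-- Primitive vectors positively proportional are equal. -/
lemma primEqAux [Module.Free ℤ L] (e : L) (he : ∀ (m : ℤ) (u : L), e = m • u → IsUnit m)
    (e' : L) (m n : ℤ) (hm : 0 < m) (hn : 0 < n) (h : m • e = n • e') :
    n / (Int.gcd m n : ℤ) = 1 := by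
  have hd0 : 0 < ((Int.gcd m n : ℕ) : ℤ) := by
    exact_mod_cast Int.gcd_pos_of_ne_zero_left n hm.ne'
  obtain ⟨m₁, hm₁⟩ : ((Int.gcd m n : ℕ) : ℤ) ∣ m := Int.gcd_dvd_left m n
  obtain ⟨n₁, hn₁⟩ : ((Int.gcd m n : ℕ) : ℤ) ∣ n := Int.gcd_dvd_right m n
  have hm₁v : m₁ = m / ((Int.gcd m n : ℕ) : ℤ) := by
    have := Int.mul_ediv_cancel_left m₁ hd0.ne'
    rw [← hm₁] at this
    exact this.symm
  have hn₁v : n₁ = n / ((Int.gcd m n : ℕ) : ℤ) := by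
    have := Int.mul_ediv_cancel_left n₁ hd0.ne'
    rw [← hn₁] at this
    exact this.symm
  have hcop : Int.gcd m₁ n₁ = 1 := by
    rw [hm₁v, hn₁v]
    exact Int.gcd_div_gcd_div_gcd (Int.gcd_pos_of_ne_zero_left n hm.ne')
  have hkey : m₁ • e = n₁ • e' := by
    have hz : ((Int.gcd m n : ℕ) : ℤ) • (m₁ • e - n₁ • e') = 0 := by
      rw [zsmul_sub, ← mul_zsmul, ← mul_zsmul, ← hm₁, ← hn₁, h, sub_self]
    exact sub_eq_zero.mp (smul_cancel _ hd0.ne' _ hz)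
  have hbez : (1 : ℤ) = m₁ * Int.gcdA m₁ n₁ + n₁ * Int.gcdB m₁ n₁ := by
    have := Int.gcd_eq_gcd_ab m₁ n₁
    rw [hcop] at this
    exact_mod_cast this
  set A := Int.gcdA m₁ n₁ with hA
  set Bz := Int.gcdB m₁ n₁ with hBz
  have heq : e = n₁ • (A • e' + Bz • e) := by
    have h2 : (m₁ * A) • e + (n₁ * Bz) • e = e := by
      rw [← add_zsmul, ← hbez, one_zsmul]
    have h3 : (m₁ * A) • e = n₁ • (A • e') := by
      rw [mul_comm, mul_zsmul, hkey, ← mul_zsmul, mul_comm, mul_zsmul]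
    have h4 : (n₁ * Bz) • e = n₁ • (Bz • e) := mul_zsmul _ _ _
    conv_lhs => rw [← h2, h3, h4]
    rw [← zsmul_add]
  have hunit : IsUnit n₁ := he n₁ _ heq
  have hn₁pos : 0 < n₁ := by
    rcases lt_trichotomy n₁ 0 with h' | h' | h'
    · have : ((Int.gcd m n : ℕ) : ℤ) * n₁ < 0 := mul_neg_of_pos_of_neg hd0 h'
      rw [← hn₁] at this; linarith
    · rw [h', mul_zero] at hn₁; omega
    · exact h'
  have : n₁ = 1 := by
    rcases Int.isUnit_iff.mp hunit with h' | h' <;> omega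
  rw [← hn₁v, this]

lemma primEq [Module.Free ℤ L] (e e' : L)
    (he : ∀ (m : ℤ) (u : L), e = m • u → IsUnit m)
    (he' : ∀ (m : ℤ) (u : L), e' = m • u → IsUnit m)
    (m n : ℤ) (hm : 0 < m) (hn : 0 < n) (h : m • e = n • e') : e = e' := by
  have hd0 : 0 < ((Int.gcd m n : ℕ) : ℤ) := by
    exact_mod_cast Int.gcd_pos_of_ne_zero_left n hm.ne'
  have h1 : n / ((Int.gcd m n : ℕ) : ℤ) = 1 := primEqAux e he e' m n hm hn h
  have h2 : m / ((Int.gcd m n : ℕ) : ℤ) = 1 := by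
    have := primEqAux e' he' e n m hn hm h.symm
    rwa [Int.gcd_comm n m] at this
  have hnd : n = ((Int.gcd m n : ℕ) : ℤ) := by
    have := Int.ediv_mul_cancel (show ((Int.gcd m n : ℕ) : ℤ) ∣ n from Int.gcd_dvd_right m n)
    rw [h1, one_mul] at this
    exact this.symm
  have hmd : m = ((Int.gcd m n : ℕ) : ℤ) := by
    have := Int.ediv_mul_cancel (show ((Int.gcd m n : ℕ) : ℤ) ∣ m from Int.gcd_dvd_left m n)
    rw [h2, one_mul] at this
    exact this.symm
  have hmn : m = n := by omega
  rw [hmn] at h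
  have hz : n • (e - e') = 0 := by rw [zsmul_sub, h, sub_self]
  exact sub_eq_zero.mp (smul_cancel n hn.ne' _ hz)

end Aux

end Stmt9Aux





section ChamberMachinery

variable {L : Type*} [AddCommGroup L] [Module ℤ L]

/-- An isometry of the lattice `(L, B)`. -/
def IsIsometry (B : L →ₗ[ℤ] L →ₗ[ℤ] ℤ) (g : L ≃ₗ[ℤ] L) : Prop :=
  ∀ x y : L, B (g x) (g y) = B x y

/-- `x₀` is a point of the positive cone lying on no mirror of a `(−2)`-root; it
determines a fundamental chamber `𝒟_L` for the Weyl group. -/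
def GenericPoint (B : L →ₗ[ℤ] L →ₗ[ℤ] ℤ) (x₀ : L) : Prop :=
  0 < B x₀ x₀ ∧ ∀ r : L, B r r = -2 → B x₀ r ≠ 0

/-- The `(−2)`-roots that are positive with respect to the chamber determined by `x₀`. -/
def PosRoots (B : L →ₗ[ℤ] L →ₗ[ℤ] ℤ) (x₀ : L) : Set L :=
  {r : L | B r r = -2 ∧ 0 < B x₀ r}

/-- A vector is fundamental if it lies in the (closure of the) fundamental chamber
`𝒟_L` determined by `x₀`, i.e. it lies in the closure of the positive cone and pairs
nonnegatively with all positive `(−2)`-roots. -/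
def IsFund (B : L →ₗ[ℤ] L →ₗ[ℤ] ℤ) (x₀ : L) (v : L) : Prop :=
  0 ≤ B v v ∧ 0 ≤ B v x₀ ∧ ∀ r ∈ PosRoots B x₀, 0 ≤ B v r

/-- A nonzero vector is positive if it has nonnegative inner product with all
fundamental vectors. -/
def IsPosVec (B : L →ₗ[ℤ] L →ₗ[ℤ] ℤ) (x₀ : L) (v : L) : Prop :=
  v ≠ 0 ∧ ∀ u : L, IsFund B x₀ u → 0 ≤ B v u

/-- A positive `(−2)`-root `r` is simple if `r − r'` is not positive for any other
positive `(−2)`-root `r'`. -/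
def IsSimpleRoot (B : L →ₗ[ℤ] L →ₗ[ℤ] ℤ) (x₀ : L) (r : L) : Prop :=
  r ∈ PosRoots B x₀ ∧ ∀ r' ∈ PosRoots B x₀, r' ≠ r → ¬ IsPosVec B x₀ (r - r')

/-- A primitive vector of a lattice. -/
def IsPrimitiveVec (v : L) : Prop := ∀ (m : ℤ) (u : L), v = m • u → IsUnit m

/-- A cusp of the fundamental domain: a primitive isotropic vector in `L ∩ 𝒟_L`. -/
def IsChamberCusp (B : L →ₗ[ℤ] L →ₗ[ℤ] ℤ) (x₀ : L) (e : L) : Prop :=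
  B e e = 0 ∧ IsPrimitiveVec e ∧ IsFund B x₀ e

end ChamberMachinery


/-- if an even hyperbolic lattice `L` has infinitely many simple
`(−2)`-roots and there is a cusp `e` of `𝒟_L` with `e.r ≤ N` for all simple
`(−2)`-roots `r`, then every symmetry `g ∈ Aut(𝒟_L)` fixes `e`. -/
theorem stmt9 (L : Type*) [AddCommGroup L] [Module ℤ L]
    [Module.Free ℤ L] [Module.Finite ℤ L]
    (B : L →ₗ[ℤ] L →ₗ[ℤ] ℤ)
    (hsym : ∀ x y : L, B x y = B y x)
    (heven : ∀ x : L, ∃ c : ℤ, B x x = 2 * c)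
    (hnondeg : ∀ x : L, (∀ y : L, B x y = 0) → x = 0)
    (hhyp : ∃ v : L, 0 < B v v ∧ ∀ x : L, B v x = 0 → x ≠ 0 → B x x < 0)
    (x₀ : L) (hx₀ : GenericPoint B x₀)
    (e : L) (he : IsChamberCusp B x₀ e)
    (hinf : {r : L | IsSimpleRoot B x₀ r}.Infinite)
    (N : ℤ) (hbound : ∀ r : L, IsSimpleRoot B x₀ r → B e r ≤ N) :
    ∀ g : L ≃ₗ[ℤ] L, IsIsometry B g → ⇑g '' PosRoots B x₀ = PosRoots B x₀ →
      g e = e := by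
  classical
  intro g hg hgR
  obtain ⟨hee, heprim, hefund⟩ := he
  obtain ⟨hx₀pos, hx₀gen⟩ := hx₀
  have hneg := Stmt9Aux.negOrth hsym hhyp
  have hg' : ∀ x y : L, B (g x) y = B x (g.symm y) := by
    intro x y
    have h := hg x (g.symm y)
    rwa [g.apply_symm_apply] at h
  have hginv' : ∀ x y : L, B (g.symm x) y = B x (g y) := by
    intro x y
    have h := hg (g.symm x) y
    rw [g.apply_symm_apply] at h
    exact h.symm
  have hgPos : ∀ r ∈ PosRoots B x₀, g r ∈ PosRoots B x₀ := by
    intro r hr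
    rw [← hgR]
    exact Set.mem_image_of_mem _ hr
  have hgInvPos : ∀ r ∈ PosRoots B x₀, g.symm r ∈ PosRoots B x₀ := by
    intro r hr
    rw [← hgR] at hr
    obtain ⟨s, hs, hgs⟩ := hr
    have h : g.symm r = s := by rw [← hgs, g.symm_apply_apply]
    rwa [h]
  have he0 : e ≠ 0 := by
    intro h
    have h2 := heprim 0 0 (by rw [h]; simp)
    rcases Int.isUnit_iff.mp h2 with h' | h' <;> norm_num at h'
  have hex₀ : 0 < B e x₀ := by
    rcases hefund.2.1.lt_or_eq with h | h
    · exact h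
    · exfalso
      have h0 : B x₀ e = 0 := by rw [hsym]; exact h.symm
      have := hneg x₀ hx₀pos e h0 he0
      rw [hee] at this
      exact lt_irrefl 0 this
  have hgee : B (g e) (g e) = 0 := by rw [hg]; exact hee
  have hge0 : g e ≠ 0 := by
    intro h
    apply he0
    have := congrArg g.symm h
    simpa using this
  have hgx₀x₀ : B (g x₀) (g x₀) = B x₀ x₀ := hg _ _
  have hgx₀0 : g x₀ ≠ 0 := by
    intro h
    rw [h] at hgx₀x₀
    simp at hgx₀x₀
    rw [← hgx₀x₀] at hx₀pos
    exact lt_irrefl 0 hx₀pos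
  have hεne : B (g x₀) x₀ ≠ 0 := by
    intro h0
    have h1 : B x₀ (g x₀) = 0 := by rw [hsym]; exact h0
    have := hneg x₀ hx₀pos (g x₀) h1 hgx₀0
    rw [hgx₀x₀] at this
    linarith
  rcases hεne.lt_or_gt with hε | hε
  · -- the cone-flipping case is impossible: all positive roots are bounded
    exfalso
    have hW : 0 < B x₀ (-(g x₀)) := by
      rw [Stmt9Aux.Bneg_right, hsym x₀ (g x₀)]
      linarith
    have hww : B (-(g x₀)) (-(g x₀)) = B x₀ x₀ := by
      rw [Stmt9Aux.Bneg_left, Stmt9Aux.Bneg_right, neg_neg, hgx₀x₀]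
    have hbnd : ∀ r ∈ PosRoots B x₀, |B x₀ r| ≤ 4 * (B x₀ x₀ + B x₀ (-(g x₀))) := by
      intro r hr
      obtain ⟨hr2, hra⟩ := hr
      have hbpos : 0 < B x₀ (g.symm r) := (hgInvPos r ⟨hr2, hra⟩).2
      have hwr : B (-(g x₀)) r = -(B x₀ (g.symm r)) := by
        rw [Stmt9Aux.Bneg_left, hg']
      set z := (B x₀ r) • (-(g x₀)) + (B x₀ (g.symm r)) • x₀ with hz
      have hzr : B z r = 0 := by
        rw [hz, Stmt9Aux.Badd_left, Stmt9Aux.Bsmul_left, Stmt9Aux.Bsmul_left, hwr]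
        ring
      have hzz : B z z = (B x₀ r) ^ 2 * (B x₀ x₀)
          + 2 * ((B x₀ r) * (B x₀ (g.symm r)) * (B x₀ (-(g x₀))))
          + (B x₀ (g.symm r)) ^ 2 * (B x₀ x₀) := by
        rw [hz]
        simp only [Stmt9Aux.Badd_left, Stmt9Aux.Badd_right, Stmt9Aux.Bsmul_left,
          Stmt9Aux.Bsmul_right, hww]
        rw [hsym (-(g x₀)) x₀]
        ring
      have hzzpos : 0 < B z z := by
        rw [hzz]
        nlinarith [mul_pos (mul_pos hra hbpos) hW, mul_pos (mul_pos hra hra) hx₀pos,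
          mul_pos (mul_pos hbpos hbpos) hx₀pos]
      have h1 := Stmt9Aux.csAnchor hsym hneg z hzzpos x₀ r hzr hr2 hx₀pos.le
      have h2 := Stmt9Aux.csAnchor hsym hneg z hzzpos (-(g x₀)) r hzr hr2
        (by rw [hww]; exact hx₀pos.le)
      have hx₀z : B x₀ z = (B x₀ r) * (B x₀ (-(g x₀))) + (B x₀ (g.symm r)) * (B x₀ x₀) := by
        rw [hz, Stmt9Aux.Badd_right, Stmt9Aux.Bsmul_right, Stmt9Aux.Bsmul_right]
      have hwz : B (-(g x₀)) z = (B x₀ r) * (B x₀ x₀)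
          + (B x₀ (g.symm r)) * (B x₀ (-(g x₀))) := by
        rw [hz, Stmt9Aux.Badd_right, Stmt9Aux.Bsmul_right, Stmt9Aux.Bsmul_right, hww,
          hsym (-(g x₀)) x₀]
      rw [hx₀z] at h1
      rw [hwz, hwr, neg_sq] at h2
      have hfinal := Stmt9Aux.arith2 (B x₀ r) (B x₀ (g.symm r)) (B x₀ x₀)
        (B x₀ (-(g x₀))) (B z z) hra hbpos hx₀pos hW hzz h1 h2
      rw [abs_of_pos hra]
      exact hfinal
    have hfin := Stmt9Aux.rootsFinite hsym hnondeg hneg x₀ hx₀pos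
      (4 * (B x₀ x₀ + B x₀ (-(g x₀))))
    exact hinf (hfin.subset (fun r hr => ⟨hr.1.1, hbnd r hr.1⟩))
  · -- the cone-preserving case
    have hginvfund : ∀ u, IsFund B x₀ u → IsFund B x₀ (g.symm u) := by
      intro u hu
      have hsymmε : 0 < B (g.symm x₀) x₀ := by
        rw [hginv', hsym]
        exact hε
      refine ⟨?_, ?_, ?_⟩
      · rw [hginv', g.apply_symm_apply]
        exact hu.1
      · refine Stmt9Aux.sameCone hsym hneg (g.symm x₀) (g.symm u) x₀ ?_ ?_ hx₀pos.le ?_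
          hsymmε.le
        · rw [hginv', g.apply_symm_apply]; exact hx₀pos
        · rw [hginv', g.apply_symm_apply]; exact hu.1
        · rw [hginv', g.apply_symm_apply, hsym]; exact hu.2.1
      · intro r hr
        rw [hginv']
        exact hu.2.2 _ (hgPos r hr)
    have hposvec : ∀ v, IsPosVec B x₀ v → IsPosVec B x₀ (g v) := by
      intro v hv
      constructor
      · intro h
        apply hv.1
        have := congrArg g.symm h
        simpa using this
      · intro u hu
        rw [hg']
        exact hv.2 _ (hginvfund u hu)
    have hsimple : ∀ r, IsSimpleRoot B x₀ r → IsSimpleRoot B x₀ (g.symm r) := by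
      intro r hr
      refine ⟨hgInvPos _ hr.1, fun r' hr' hne hpos => ?_⟩
      have h1 := hposvec _ hpos
      rw [map_sub, g.apply_symm_apply] at h1
      exact hr.2 (g r') (hgPos _ hr')
        (fun h => hne (by rw [← h, g.symm_apply_apply])) h1
    have hgeroots : ∀ r ∈ PosRoots B x₀, 0 ≤ B (g e) r := by
      intro r hr
      rw [hg']
      exact hefund.2.2 _ (hgInvPos r hr)
    have hgex₀ : 0 < B (g e) x₀ := by
      have hnn : 0 ≤ B (g e) x₀ := by
        refine Stmt9Aux.sameCone hsym hneg (g x₀) (g e) x₀ ?_ ?_ hx₀pos.le ?_ hε.le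
        · rw [hg]; exact hx₀pos
        · rw [hgee]
        · rw [hg, hsym]; exact hefund.2.1
      rcases hnn.lt_or_eq with h | h
      · exact h
      · exfalso
        have h0 : B x₀ (g e) = 0 := by rw [hsym]; exact h.symm
        have := hneg x₀ hx₀pos (g e) h0 hge0
        rw [hgee] at this
        exact lt_irrefl 0 this
    have ht : 0 ≤ B e (g e) := by
      refine Stmt9Aux.sameCone hsym hneg x₀ e (g e) hx₀pos ?_ ?_ ?_ ?_
      · rw [hee]
      · rw [hgee]
      · rw [hsym]; exact hefund.2.1
      · rw [hsym]; exact hgex₀.le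
    rcases ht.lt_or_eq with htpos | ht0
    · -- positive pairing: contradiction with infinitude of simple roots
      exfalso
      have hff : 0 < B (e + g e) (e + g e) := by
        simp only [Stmt9Aux.Badd_left, Stmt9Aux.Badd_right, hee, hgee]
        rw [hsym (g e) e]
        linarith
      have hbnd2 : ∀ r, IsSimpleRoot B x₀ r → |B (e + g e) r| ≤ 2 * N := by
        intro r hr
        have h1 : 0 ≤ B e r := hefund.2.2 r hr.1
        have h2 : B e r ≤ N := hbound r hr
        have h3 : 0 ≤ B (g e) r := hgeroots r hr.1
        have h4 : B (g e) r ≤ N := by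
          rw [hg']
          exact hbound _ (hsimple r hr)
        rw [Stmt9Aux.Badd_left, abs_le]
        constructor <;> linarith
      have hfin := Stmt9Aux.rootsFinite hsym hnondeg hneg (e + g e) hff (2 * N)
      exact hinf (hfin.subset (fun r hr => ⟨hr.1.1, hbnd2 r hr⟩))
    · -- orthogonal isotropic vectors in the same cone are equal
      have heq := Stmt9Aux.sameConeEq hsym hneg x₀ e (g e) hx₀pos (le_of_eq hee.symm)
        (le_of_eq hgee.symm) ht0.symm
      have hm : 0 < B x₀ (g e) := by rw [hsym]; exact hgex₀
      have hn : 0 < B x₀ e := by rw [hsym]; exact hex₀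
      have hgeprim : ∀ (m : ℤ) (u : L), g e = m • u → IsUnit m := by
        intro m u h
        apply heprim m (g.symm u)
        have h2 := congrArg g.symm h
        rw [g.symm_apply_apply, map_zsmul] at h2
        exact h2
      exact (Stmt9Aux.primEq e (g e) heprim hgeprim _ _ hm hn heq).symm
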